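/- (Closedness of the subfunctor E^L_N.) Let A ⟶f B ⟶g C ⟶h A⟦1⟧ and B ⟶b B' ⟶b' B'' ⟶b'' B⟦1⟧ be distinguished triangles in C, and assume that both h: C ⟶ A⟦1⟧ and b'': B'' ⟶ B⟦1⟧ satisfy condition (Lex). Then for any distinguished triangle A ⟶(b∘f) B' ⟶y C' ⟶z A⟦1⟧ completing the composite b ∘ f, the morphism z: C' ⟶ A⟦1⟧ also satisfies condition (Lex). -/

import Mathlib

open CategoryTheory CategoryTheory.Limits CategoryTheory.Pretriangulated

universe v u v₂ u₂

variable {C : Type u} [Category.{v} C] [Preadditive C] [HasZeroObject C]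
  [HasShift C ℤ] [∀ n : ℤ, (shiftFunctor C n).Additive] [Pretriangulated C]

/-- `f : X ⟶ Y` factors through an object of `N`. -/
def FactorsThru (N : Set C) {X Y : C} (f : X ⟶ Y) : Prop :=
  ∃ (Z : C) (_ : Z ∈ N) (u : X ⟶ Z) (v : Z ⟶ Y), f = u ≫ v

/-- The morphism `X⟦-1⟧ ⟶ A` obtained from `h : X ⟶ A⟦1⟧` by shifting by `-1` and
composing with the canonical isomorphism `A⟦1⟧⟦-1⟧ ≅ A`. -/
noncomputable def descShift {X A : C} (h : X ⟶ A⟦(1:ℤ)⟧) : X⟦(-1:ℤ)⟧ ⟶ A :=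
  h⟦(-1:ℤ)⟧' ≫ (shiftEquiv C (1:ℤ)).unitIso.inv.app A

/-- The class `S_N` of morphisms fitting in a distinguished triangle whose two other
maps factor through `N`. -/
def SN (N : Set C) {B C₀ : C} (g : B ⟶ C₀) : Prop :=
  ∃ (A : C) (f : A ⟶ B) (h : C₀ ⟶ A⟦(1:ℤ)⟧),
    (Triangle.mk f g h ∈ distTriang C) ∧ FactorsThru N f ∧ FactorsThru N h

/-- The class `L`. -/
def ClassL (N : Set C) {A B : C} (f : A ⟶ B) : Prop :=
  ∃ (N₀ : C) (_ : N₀ ∈ N) (g : B ⟶ N₀) (h : N₀ ⟶ A⟦(1:ℤ)⟧),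
    (Triangle.mk f g h ∈ distTriang C) ∧ FactorsThru N (descShift h)

/-- The class `R`. -/
def ClassR (N : Set C) {B C₀ : C} (g : B ⟶ C₀) : Prop :=
  ∃ (N₀ : C) (_ : N₀ ∈ N) (f : N₀ ⟶ B) (h : C₀ ⟶ N₀⟦(1:ℤ)⟧),
    (Triangle.mk f g h ∈ distTriang C) ∧ FactorsThru N h

/-- Condition (Lex) on a morphism `h : C₀ ⟶ A⟦1⟧`. -/
def LexCond (N : Set C) {C₀ A : C} (h : C₀ ⟶ A⟦(1:ℤ)⟧) : Prop :=
  ∀ (N₀ : C), N₀ ∈ N → ∀ (x : N₀ ⟶ C₀), FactorsThru N (descShift (x ≫ h))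

/-- Condition (Rex) on a morphism `h : C₀ ⟶ A⟦1⟧`. -/
def RexCond (N : Set C) {C₀ A : C} (h : C₀ ⟶ A⟦(1:ℤ)⟧) : Prop :=
  ∀ (N₀ : C), N₀ ∈ N → ∀ (y : A ⟶ N₀),
    ∃ (M : C) (_ : M ∈ N) (u : C₀⟦(-1:ℤ)⟧ ⟶ M⟦(-1:ℤ)⟧) (v : M⟦(-1:ℤ)⟧ ⟶ N₀),
      descShift h ≫ y = u ≫ v

/-- `S_N` as a morphism property. -/
def SNProp (N : Set C) : MorphismProperty C := fun _ _ g => SN N g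



lemma descShift_comp {X A B : C} (p : X ⟶ A⟦(1:ℤ)⟧) (q : A ⟶ B) :
    descShift (p ≫ q⟦(1:ℤ)⟧') = descShift p ≫ q := by
  dsimp only [descShift]
  rw [Functor.map_comp]
  erw [Category.assoc, Category.assoc]
  erw [(shiftEquiv C (1:ℤ)).unitIso.inv.naturality q]
  rfl

lemma descShift_precomp {Y X A : C} (x : Y ⟶ X) (p : X ⟶ A⟦(1:ℤ)⟧) :
    descShift (x ≫ p) = x⟦(-1:ℤ)⟧' ≫ descShift p := by
  dsimp only [descShift]; rw [Functor.map_comp]; exact Category.assoc _ _ _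

lemma descShift_zero {X A : C} : descShift (0 : X ⟶ A⟦(1:ℤ)⟧) = 0 := by
  dsimp only [descShift]; simp

lemma descShift_inj {X A : C} {p q : X ⟶ A⟦(1:ℤ)⟧} (hpq : descShift p = descShift q) :
    p = q := by
  dsimp only [descShift] at hpq
  have h2 : p⟦(-1:ℤ)⟧' = q⟦(-1:ℤ)⟧' := by
    have := congrArg (fun t => t ≫ (shiftEquiv C (1:ℤ)).unitIso.hom.app A) hpq
    exact (cancel_mono ((shiftEquiv C (1:ℤ)).unitIso.inv.app A)).1 hpq
  exact (shiftFunctor C (-1:ℤ)).map_injective h2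

theorem stmt15 (N : Set C)
    (hN0 : ∀ X : C, Limits.IsZero X → X ∈ N)
    (hNiso : ∀ ⦃X Y : C⦄, (X ≅ Y) → X ∈ N → Y ∈ N)
    (hNsum : ∀ ⦃X Z : C⦄ (i : X ⟶ Z) (r : Z ⟶ X), i ≫ r = 𝟙 X → Z ∈ N → X ∈ N)
    (hNext : ∀ (T : Triangle C), (T ∈ distTriang C) → T.obj₁ ∈ N → T.obj₃ ∈ N → T.obj₂ ∈ N)
    {A B B' B'' C₀ : C} (f : A ⟶ B) (g : B ⟶ C₀) (h : C₀ ⟶ A⟦(1:ℤ)⟧)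
    (b : B ⟶ B') (b' : B' ⟶ B'') (b'' : B'' ⟶ B⟦(1:ℤ)⟧)
    (hT1 : Triangle.mk f g h ∈ distTriang C)
    (hT2 : Triangle.mk b b' b'' ∈ distTriang C)
    (hLex1 : LexCond N h) (hLex2 : LexCond N b'')
    {C' : C} (y : B' ⟶ C') (z : C' ⟶ A⟦(1:ℤ)⟧)
    (hT3 : Triangle.mk (f ≫ b) y z ∈ distTriang C) :
    LexCond N z := by
  intro N₀ hN₀ x
  -- Step 1: complete (f, 𝟙) : T3 ⟶ T2 to get d : C' ⟶ B''
  obtain ⟨d, -, hd2⟩ := complete_distinguished_triangle_morphism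
    (Triangle.mk (f ≫ b) y z) (Triangle.mk b b' b'') hT3 hT2 f (𝟙 B') (by exact Category.comp_id _)
  change C' ⟶ B'' at d
  change z ≫ f⟦(1:ℤ)⟧' = d ≫ b'' at hd2
  -- hd2 : z ≫ f⟦1⟧' = d ≫ b''
  -- Step 2: apply Lex(b'') to x ≫ d
  obtain ⟨M, hM, u, v, huv⟩ := hLex2 N₀ hN₀ (x ≫ d)
  -- Step 3: triangle on u
  obtain ⟨G₀, i₀, j₀, hTu⟩ := distinguished_cocone_triangle u
  have hG₀ : G₀ ∈ N := hNext _ (rot_of_distTriang _ hTu) hM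
    (hNiso ((shiftEquiv C (1:ℤ)).counitIso.app N₀).symm hN₀)
  set jG : G₀ ⟶ N₀ := (shiftFunctor C (-1:ℤ)).preimage (descShift j₀) with hjGdef
  have hjG : jG⟦(-1:ℤ)⟧' = descShift j₀ := (shiftFunctor C (-1:ℤ)).map_preimage _
  set uh : N₀ ⟶ M⟦(1:ℤ)⟧ :=
    (shiftFunctor C (-1:ℤ)).preimage (u ≫ (shiftEquiv C (1:ℤ)).unitIso.hom.app M) with huhdef
  have hdescuh : descShift uh = u := by
    dsimp only [descShift]
    rw [huhdef, (shiftFunctor C (-1:ℤ)).map_preimage]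
    erw [Category.assoc, Iso.hom_inv_id_app]
    exact Category.comp_id u
  have hjGuh : jG ≫ uh = 0 := by
    apply descShift_inj
    rw [descShift_precomp, hdescuh, hjG, descShift_zero, ← descShift_comp]
    have h31 := comp_distTriang_mor_zero₃₁ _ hTu
    change j₀ ≫ u⟦(1:ℤ)⟧' = 0 at h31
    rw [h31, descShift_zero]
  have hδ : (x ≫ d) ≫ b'' = uh ≫ v⟦(1:ℤ)⟧' := by
    apply descShift_inj
    rw [huv, descShift_comp, hdescuh]
  have e1 : (x ≫ z) ≫ f⟦(1:ℤ)⟧' = uh ≫ v⟦(1:ℤ)⟧' := by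
    rw [Category.assoc, hd2, ← Category.assoc]; exact hδ
  have hφf : (jG ≫ (x ≫ z)) ≫ f⟦(1:ℤ)⟧' = 0 := by
    rw [Category.assoc, e1, ← Category.assoc, hjGuh, zero_comp]
  obtain ⟨m, hm⟩ := Triangle.coyoneda_exact₂ _
    (rot_of_distTriang _ (rot_of_distTriang _ hT1)) (jG ≫ (x ≫ z)) (by
      change (jG ≫ (x ≫ z)) ≫ (-f⟦(1:ℤ)⟧') = 0
      rw [Preadditive.comp_neg, hφf, neg_zero])
  change G₀ ⟶ C₀ at m
  change jG ≫ (x ≫ z) = m ≫ h at hm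
  -- hm : jG ≫ (x ≫ z) = m ≫ h
  obtain ⟨P, hP, a1t, a₂, ha⟩ := hLex1 G₀ hG₀ m
  -- the inverse rotated triangle, written with explicit morphisms
  set jm : G₀⟦(-1:ℤ)⟧ ⟶ N₀⟦(-1:ℤ)⟧ := -(descShift j₀) with hjmdef
  set im : M ⟶ G₀⟦(-1:ℤ)⟧⟦(1:ℤ)⟧ :=
    i₀ ≫ (shiftEquiv C (1:ℤ)).counitIso.inv.app G₀ with himdef
  have hTrot : Triangle.mk jm u im ∈ distTriang C := by
    refine isomorphic_distinguished _ (inv_rot_of_distTriang _ hTu) _ ?_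
    exact Triangle.isoMk _ _ (Iso.refl _) (Iso.refl _) (Iso.refl _)
      (by simp [hjmdef, descShift, shiftEquiv]; exact (Category.comp_id _).trans (Category.id_comp _).symm) (by exact (Category.comp_id _).trans (Category.id_comp _).symm)
      (by exact Eq.trans (congrArg (fun t => im ≫ t) ((shiftFunctor C (1:ℤ)).map_id _)) ((Category.comp_id _).trans (Category.id_comp _).symm))
  have hkey : jm ≫ descShift (x ≫ z) = (-a1t) ≫ a₂ := by
    rw [hjmdef, Preadditive.neg_comp, Preadditive.neg_comp, neg_inj, ← hjG,
      ← descShift_precomp, hm, ha]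
  -- pushout triangle
  obtain ⟨W, iW, jW, hTW⟩ := distinguished_cocone_triangle₂ (im ≫ (-a1t)⟦(1:ℤ)⟧')
  have hW : W ∈ N := hNext _ hTW hP hM
  obtain ⟨ρ, hρ1, hρ2⟩ := complete_distinguished_triangle_morphism₂
    (Triangle.mk jm u im) (Triangle.mk iW jW (im ≫ (-a1t)⟦(1:ℤ)⟧')) hTrot hTW
    (-a1t) (𝟙 M) (by exact (Category.id_comp _).symm)
  change N₀⟦(-1:ℤ)⟧ ⟶ W at ρ
  change jm ≫ ρ = (-a1t) ≫ iW at hρ1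
  change u ≫ 𝟙 M = ρ ≫ jW at hρ2
  rw [Category.comp_id] at hρ2
  -- hρ1 : jm ≫ ρ = -a1t ≫ iW ; hρ2 : u = ρ ≫ jW
  have h31 : descShift im ≫ jm = 0 := by
    rw [← descShift_comp]
    have := comp_distTriang_mor_zero₃₁ _ hTrot
    change im ≫ jm⟦(1:ℤ)⟧' = 0 at this
    rw [this, descShift_zero]
  obtain ⟨ψ, hψ⟩ := Triangle.yoneda_exact₂ _ (inv_rot_of_distTriang _ hTW) a₂ (by
    change (-(im ≫ (-a1t)⟦(1:ℤ)⟧')⟦(-1:ℤ)⟧' ≫ (shiftEquiv C (1:ℤ)).unitIso.inv.app P) ≫ a₂ = 0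
    rw [Preadditive.neg_comp, neg_eq_zero]
    show descShift (im ≫ (-a1t)⟦(1:ℤ)⟧') ≫ a₂ = 0
    rw [descShift_comp, Category.assoc, ← hkey, ← Category.assoc, h31, zero_comp])
  change W ⟶ A at ψ
  change a₂ = iW ≫ ψ at hψ
  -- hψ : a₂ = iW ≫ ψ
  obtain ⟨ω, hω⟩ := Triangle.yoneda_exact₂ _ hTrot (descShift (x ≫ z) - ρ ≫ ψ) (by
    change jm ≫ (descShift (x ≫ z) - ρ ≫ ψ) = 0
    rw [Preadditive.comp_sub, hkey, ← Category.assoc, hρ1, Category.assoc, ← hψ, sub_self])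
  change M ⟶ A at ω
  change descShift (x ≫ z) - ρ ≫ ψ = u ≫ ω at hω
  -- hω : descShift (x ≫ z) - ρ ≫ ψ = u ≫ ω
  rw [hρ2] at hω
  have hbi : (W ⊞ M : C) ∈ N := hNext _ (binaryBiproductTriangle_distinguished W M) hW hM
  refine ⟨W ⊞ M, hbi, biprod.lift ρ (ρ ≫ jW), biprod.desc ψ ω, ?_⟩
  rw [biprod.lift_desc, ← hω]
  abel
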